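/- arXiv:2107.01859 — 3 statements merged into one kernel-verified Lean document; each statement's English description precedes it below -/
import Mathlib

section
/- Let m ≥ 1 be an integer, 0 < x_1 < ... < x_m, and let p_0, q_0, p_{j,k}, q_{j,k} : (0,∞) → ℂ (j = 1,...,m; k = 1,2,3) be differentiable functions satisfying the system (1.4) and the constraints (1.5). For each fixed r > 0, view H(r; ·) as a function of the 6m+2 complex variables (p_0, q_0, {p_{j,k}, q_{j,k}}). Then for every r > 0, Hamilton's equations hold at the point given by the values of the functions at r: q_0'(r) = ∂H/∂p_0, p_0'(r) = −∂H/∂q_0, and for all j = 1,...,m and k = 1,2,3: q_{j,k}'(r) = ∂H/∂p_{j,k} and p_{j,k}'(r) = −∂H/∂q_{j,k}. In other words, H is a Hamiltonian for the system (1.4)–(1.5). -/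
open Real Complex Filter Topology Finset

noncomputable section

/-- `S_{kl}(r) = ∑_j p_{j,k}(r) q_{j,l}(r)` (indices shifted: `k l : Fin 3` with `0,1,2`
corresponding to `1,2,3` in the paper). -/
def pS {m : ℕ} (p q : Fin m → Fin 3 → ℝ → ℂ) (k l : Fin 3) (r : ℝ) : ℂ :=
  ∑ j, p j k r * q j l r

/-- The system of ODEs (1.4) holding at the point `r`. -/
def PearceySystemAt {m : ℕ} (x : Fin m → ℝ) (p0 q0 : ℝ → ℂ)
    (p q : Fin m → Fin 3 → ℝ → ℂ) (r : ℝ) : Prop :=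
  HasDerivAt p0 (-(Real.sqrt 2 * ∑ j, (x j : ℂ) * p j 2 r * q j 1 r)) r ∧
  HasDerivAt q0 (Real.sqrt 2 * ∑ j, (x j : ℂ) * p j 1 r * q j 0 r) r ∧
  ∀ j : Fin m,
    HasDerivAt (q j 0)
      (2 / r * pS p q 0 0 r * q j 0 r + x j * q j 1 r + 2 / r * pS p q 2 0 r * q j 2 r) r ∧
    HasDerivAt (q j 1)
      (Real.sqrt 2 * p0 r * x j * q j 0 r + 2 / r * pS p q 1 1 r * q j 1 r + x j * q j 2 r) r ∧
    HasDerivAt (q j 2)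
      ((r * x j ^ 2 + 2 / r * pS p q 0 2 r) * q j 0 r + Real.sqrt 2 * q0 r * x j * q j 1 r
        + 2 / r * pS p q 2 2 r * q j 2 r) r ∧
    HasDerivAt (p j 0)
      (-(2 / r * pS p q 0 0 r * p j 0 r) - Real.sqrt 2 * p0 r * x j * p j 1 r
        - (r * x j ^ 2 + 2 / r * pS p q 0 2 r) * p j 2 r) r ∧
    HasDerivAt (p j 1)
      (-(x j * p j 0 r) - 2 / r * pS p q 1 1 r * p j 1 r
        - Real.sqrt 2 * q0 r * x j * p j 2 r) r ∧
    HasDerivAt (p j 2)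
      (-(2 / r * pS p q 2 0 r * p j 0 r) - x j * p j 1 r - 2 / r * pS p q 2 2 r * p j 2 r) r

/-- The constraints (1.5). -/
def PearceyConstraint {m : ℕ} (p q : Fin m → Fin 3 → ℝ → ℂ) : Prop :=
  ∀ r : ℝ, 0 < r → ∀ j : Fin m, ∑ k, p j k r * q j k r = 0

/-- Pointwise `S_{kl}`. -/
def pSpt {m : ℕ} (p q : Fin m → Fin 3 → ℂ) (k l : Fin 3) : ℂ := ∑ j, p j k * q j l

/-- The Hamiltonian (1.7), as a function of `r` and the `6m+2` complex variables. -/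
def pearceyH {m : ℕ} (x : Fin m → ℝ) (r : ℝ) (p0 q0 : ℂ) (p q : Fin m → Fin 3 → ℂ) : ℂ :=
  Real.sqrt 2 * p0 * ∑ j, (x j : ℂ) * p j 1 * q j 0
    + Real.sqrt 2 * q0 * ∑ j, (x j : ℂ) * p j 2 * q j 1
    + ∑ j, (x j : ℂ) * p j 0 * q j 1
    + ∑ j, (x j : ℂ) * p j 1 * q j 2
    + ∑ j, (r : ℂ) * (x j : ℂ) ^ 2 * p j 2 * q j 0
    + 1 / (2 * (r : ℂ)) *
        ((pSpt p q 0 0 - pSpt p q 1 1 + pSpt p q 2 2) ^ 2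
          - 2 * ∑ k, ∑ l, (p k 0 * p l 2 - p k 2 * p l 0) * (q k 0 * q l 2 - q k 2 * q l 0))

/-- The Hamiltonian evaluated along functions of `r`. -/
def pearceyHAlong {m : ℕ} (x : Fin m → ℝ) (p0 q0 : ℝ → ℂ)
    (p q : Fin m → Fin 3 → ℝ → ℂ) (r : ℝ) : ℂ :=
  pearceyH x r (p0 r) (q0 r) (fun j k => p j k r) (fun j k => q j k r)
/-- Replace the `(j,k)` coordinate of a family of complex numbers by `z`. -/
def updC {m : ℕ} (p : Fin m → Fin 3 → ℂ) (j : Fin m) (k : Fin 3) (z : ℂ) :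
    Fin m → Fin 3 → ℂ :=
  fun j' k' => if j' = j ∧ k' = k then z else p j' k'


section Aux

variable {m : ℕ}

lemma pearceyH_alt (x : Fin m → ℝ) (r : ℝ) (p0 q0 : ℂ) (p q : Fin m → Fin 3 → ℂ) :
    pearceyH x r p0 q0 p q =
      Real.sqrt 2 * p0 * ∑ j, (x j : ℂ) * p j 1 * q j 0
        + Real.sqrt 2 * q0 * ∑ j, (x j : ℂ) * p j 2 * q j 1
        + ∑ j, (x j : ℂ) * p j 0 * q j 1
        + ∑ j, (x j : ℂ) * p j 1 * q j 2
        + ∑ j, (r : ℂ) * (x j : ℂ) ^ 2 * p j 2 * q j 0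
        + 1 / (2 * (r : ℂ)) *
            ((pSpt p q 0 0 - pSpt p q 1 1 + pSpt p q 2 2) ^ 2
              - 4 * (pSpt p q 0 0 * pSpt p q 2 2 - pSpt p q 0 2 * pSpt p q 2 0)) := by
  have key : ∀ a b : Fin m,
      (p a 0 * p b 2 - p a 2 * p b 0) * (q a 0 * q b 2 - q a 2 * q b 0)
        = (p a 0 * q a 0) * (p b 2 * q b 2) - (p a 0 * q a 2) * (p b 2 * q b 0)
          - (p a 2 * q a 0) * (p b 0 * q b 2) + (p a 2 * q a 2) * (p b 0 * q b 0) := by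
    intro a b; ring
  have hsum : (∑ a, ∑ b, (p a 0 * p b 2 - p a 2 * p b 0) * (q a 0 * q b 2 - q a 2 * q b 0))
      = 2 * (pSpt p q 0 0 * pSpt p q 2 2 - pSpt p q 0 2 * pSpt p q 2 0) := by
    simp_rw [key]
    simp only [Finset.sum_add_distrib, Finset.sum_sub_distrib]
    rw [← Finset.sum_mul_sum, ← Finset.sum_mul_sum, ← Finset.sum_mul_sum, ← Finset.sum_mul_sum]
    unfold pSpt
    ring
  unfold pearceyH
  rw [hsum]
  ring

lemma hd_updC (p : Fin m → Fin 3 → ℂ) (j j' : Fin m) (k k' : Fin 3) (w : ℂ) :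
    HasDerivAt (fun z => updC p j k z j' k') (if j' = j ∧ k' = k then 1 else 0) w := by
  unfold updC
  by_cases h : j' = j ∧ k' = k
  · simpa [h] using hasDerivAt_id' w
  · simpa [h] using hasDerivAt_const w (p j' k')

lemma updC_self' (p : Fin m → Fin 3 → ℂ) (j : Fin m) (k : Fin 3) (w : ℂ) (hw : w = p j k) :
    updC p j k w = p := by
  funext j' k'
  unfold updC
  split
  · next h => rw [hw, h.1, h.2]
  · rfl

lemma hd_wsum_p (pv qv : Fin m → Fin 3 → ℂ) (c : Fin m → ℂ) (j : Fin m) (k a b : Fin 3)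
    (w : ℂ) :
    HasDerivAt (fun z => ∑ i, c i * updC pv j k z i a * qv i b)
      (if a = k then c j * qv j b else 0) w := by
  have h := HasDerivAt.fun_sum (fun i (_ : i ∈ Finset.univ) =>
    ((hd_updC pv j i k a w).const_mul (c i)).mul_const (qv i b))
  have e : (∑ i, (c i * if i = j ∧ a = k then (1 : ℂ) else 0) * qv i b)
      = if a = k then c j * qv j b else 0 := by
    by_cases hak : a = k
    · simp [hak, mul_ite, ite_mul, mul_one, mul_zero, zero_mul, Finset.sum_ite_eq']
    · simp [hak]
  exact e ▸ h

lemma hd_pSpt_p (pv qv : Fin m → Fin 3 → ℂ) (j : Fin m) (k a b : Fin 3) (w : ℂ) :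
    HasDerivAt (fun z => pSpt (updC pv j k z) qv a b) (if a = k then qv j b else 0) w := by
  unfold pSpt
  have h := HasDerivAt.fun_sum (fun i (_ : i ∈ Finset.univ) =>
    (hd_updC pv j i k a w).mul_const (qv i b))
  have e : (∑ i, (if i = j ∧ a = k then (1 : ℂ) else 0) * qv i b)
      = if a = k then qv j b else 0 := by
    by_cases hak : a = k
    · simp [hak, ite_mul, one_mul, zero_mul, Finset.sum_ite_eq']
    · simp [hak]
  exact e ▸ h

lemma hd_wsum_q (pv qv : Fin m → Fin 3 → ℂ) (c : Fin m → ℂ) (j : Fin m) (k a b : Fin 3)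
    (w : ℂ) :
    HasDerivAt (fun z => ∑ i, c i * pv i a * updC qv j k z i b)
      (if b = k then c j * pv j a else 0) w := by
  have h := HasDerivAt.fun_sum (fun i (_ : i ∈ Finset.univ) =>
    (hd_updC qv j i k b w).const_mul (c i * pv i a))
  have e : (∑ i, c i * pv i a * (if i = j ∧ b = k then (1 : ℂ) else 0))
      = if b = k then c j * pv j a else 0 := by
    by_cases hbk : b = k
    · simp [hbk, mul_ite, mul_one, mul_zero, Finset.sum_ite_eq']
    · simp [hbk]
  exact e ▸ h

lemma hd_pSpt_q (pv qv : Fin m → Fin 3 → ℂ) (j : Fin m) (k a b : Fin 3) (w : ℂ) :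
    HasDerivAt (fun z => pSpt pv (updC qv j k z) a b) (if b = k then pv j a else 0) w := by
  unfold pSpt
  have h := HasDerivAt.fun_sum (fun i (_ : i ∈ Finset.univ) =>
    (hd_updC qv j i k b w).const_mul (pv i a))
  have e : (∑ i, pv i a * (if i = j ∧ b = k then (1 : ℂ) else 0))
      = if b = k then pv j a else 0 := by
    by_cases hbk : b = k
    · simp [hbk, mul_ite, mul_one, mul_zero, Finset.sum_ite_eq']
    · simp [hbk]
  exact e ▸ h

lemma hd_pearceyH_p (x : Fin m → ℝ) (r : ℝ) (P0 Q0 : ℂ) (pv qv : Fin m → Fin 3 → ℂ)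
    (j : Fin m) (k : Fin 3) (w : ℂ) :
    HasDerivAt (fun z => pearceyH x r P0 Q0 (updC pv j k z) qv)
      (Real.sqrt 2 * P0 * (if (1 : Fin 3) = k then (x j : ℂ) * qv j 0 else 0)
        + Real.sqrt 2 * Q0 * (if (2 : Fin 3) = k then (x j : ℂ) * qv j 1 else 0)
        + (if (0 : Fin 3) = k then (x j : ℂ) * qv j 1 else 0)
        + (if (1 : Fin 3) = k then (x j : ℂ) * qv j 2 else 0)
        + (if (2 : Fin 3) = k then (r : ℂ) * (x j : ℂ) ^ 2 * qv j 0 else 0)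
        + 1 / (2 * (r : ℂ)) *
            ((2 : ℕ) * (pSpt (updC pv j k w) qv 0 0 - pSpt (updC pv j k w) qv 1 1
                + pSpt (updC pv j k w) qv 2 2) ^ 1 *
              ((if (0 : Fin 3) = k then qv j 0 else 0) - (if (1 : Fin 3) = k then qv j 1 else 0)
                + (if (2 : Fin 3) = k then qv j 2 else 0))
             - 4 * ((if (0 : Fin 3) = k then qv j 0 else 0) * pSpt (updC pv j k w) qv 2 2
                + pSpt (updC pv j k w) qv 0 0 * (if (2 : Fin 3) = k then qv j 2 else 0)
                - ((if (0 : Fin 3) = k then qv j 2 else 0) * pSpt (updC pv j k w) qv 2 0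
                  + pSpt (updC pv j k w) qv 0 2 * (if (2 : Fin 3) = k then qv j 0 else 0))))) w := by
  have hfun : (fun z => pearceyH x r P0 Q0 (updC pv j k z) qv)
      = fun z => Real.sqrt 2 * P0 * ∑ i, (x i : ℂ) * updC pv j k z i 1 * qv i 0
        + Real.sqrt 2 * Q0 * ∑ i, (x i : ℂ) * updC pv j k z i 2 * qv i 1
        + ∑ i, (x i : ℂ) * updC pv j k z i 0 * qv i 1
        + ∑ i, (x i : ℂ) * updC pv j k z i 1 * qv i 2
        + ∑ i, (r : ℂ) * (x i : ℂ) ^ 2 * updC pv j k z i 2 * qv i 0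
        + 1 / (2 * (r : ℂ)) *
            ((pSpt (updC pv j k z) qv 0 0 - pSpt (updC pv j k z) qv 1 1
                + pSpt (updC pv j k z) qv 2 2) ^ 2
              - 4 * (pSpt (updC pv j k z) qv 0 0 * pSpt (updC pv j k z) qv 2 2
                  - pSpt (updC pv j k z) qv 0 2 * pSpt (updC pv j k z) qv 2 0)) :=
    funext fun z => pearceyH_alt x r P0 Q0 (updC pv j k z) qv
  rw [hfun]
  have h1 := (hd_wsum_p pv qv (fun i => ((x i : ℝ) : ℂ)) j k 1 0 w).const_mul
    ((Real.sqrt 2 : ℂ) * P0)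
  have h2 := (hd_wsum_p pv qv (fun i => ((x i : ℝ) : ℂ)) j k 2 1 w).const_mul
    ((Real.sqrt 2 : ℂ) * Q0)
  have h3 := hd_wsum_p pv qv (fun i => ((x i : ℝ) : ℂ)) j k 0 1 w
  have h4 := hd_wsum_p pv qv (fun i => ((x i : ℝ) : ℂ)) j k 1 2 w
  have h5 := hd_wsum_p pv qv (fun i => (r : ℂ) * (x i : ℂ) ^ 2) j k 2 0 w
  have hA := ((hd_pSpt_p pv qv j k 0 0 w).sub (hd_pSpt_p pv qv j k 1 1 w)).add
    (hd_pSpt_p pv qv j k 2 2 w)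
  have hSq := hA.pow 2
  have hT := (((hd_pSpt_p pv qv j k 0 0 w).mul (hd_pSpt_p pv qv j k 2 2 w)).sub
    ((hd_pSpt_p pv qv j k 0 2 w).mul (hd_pSpt_p pv qv j k 2 0 w))).const_mul (4 : ℂ)
  have h6 := (hSq.sub hT).const_mul (1 / (2 * (r : ℂ)))
  exact ((((h1.add h2).add h3).add h4).add h5).add h6

lemma hd_pearceyH_q (x : Fin m → ℝ) (r : ℝ) (P0 Q0 : ℂ) (pv qv : Fin m → Fin 3 → ℂ)
    (j : Fin m) (k : Fin 3) (w : ℂ) :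
    HasDerivAt (fun z => pearceyH x r P0 Q0 pv (updC qv j k z))
      (Real.sqrt 2 * P0 * (if (0 : Fin 3) = k then (x j : ℂ) * pv j 1 else 0)
        + Real.sqrt 2 * Q0 * (if (1 : Fin 3) = k then (x j : ℂ) * pv j 2 else 0)
        + (if (1 : Fin 3) = k then (x j : ℂ) * pv j 0 else 0)
        + (if (2 : Fin 3) = k then (x j : ℂ) * pv j 1 else 0)
        + (if (0 : Fin 3) = k then (r : ℂ) * (x j : ℂ) ^ 2 * pv j 2 else 0)
        + 1 / (2 * (r : ℂ)) *
            ((2 : ℕ) * (pSpt pv (updC qv j k w) 0 0 - pSpt pv (updC qv j k w) 1 1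
                + pSpt pv (updC qv j k w) 2 2) ^ 1 *
              ((if (0 : Fin 3) = k then pv j 0 else 0) - (if (1 : Fin 3) = k then pv j 1 else 0)
                + (if (2 : Fin 3) = k then pv j 2 else 0))
             - 4 * ((if (0 : Fin 3) = k then pv j 0 else 0) * pSpt pv (updC qv j k w) 2 2
                + pSpt pv (updC qv j k w) 0 0 * (if (2 : Fin 3) = k then pv j 2 else 0)
                - ((if (2 : Fin 3) = k then pv j 0 else 0) * pSpt pv (updC qv j k w) 2 0
                  + pSpt pv (updC qv j k w) 0 2 * (if (0 : Fin 3) = k then pv j 2 else 0))))) w := by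
  have hfun : (fun z => pearceyH x r P0 Q0 pv (updC qv j k z))
      = fun z => Real.sqrt 2 * P0 * ∑ i, (x i : ℂ) * pv i 1 * updC qv j k z i 0
        + Real.sqrt 2 * Q0 * ∑ i, (x i : ℂ) * pv i 2 * updC qv j k z i 1
        + ∑ i, (x i : ℂ) * pv i 0 * updC qv j k z i 1
        + ∑ i, (x i : ℂ) * pv i 1 * updC qv j k z i 2
        + ∑ i, (r : ℂ) * (x i : ℂ) ^ 2 * pv i 2 * updC qv j k z i 0
        + 1 / (2 * (r : ℂ)) *
            ((pSpt pv (updC qv j k z) 0 0 - pSpt pv (updC qv j k z) 1 1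
                + pSpt pv (updC qv j k z) 2 2) ^ 2
              - 4 * (pSpt pv (updC qv j k z) 0 0 * pSpt pv (updC qv j k z) 2 2
                  - pSpt pv (updC qv j k z) 0 2 * pSpt pv (updC qv j k z) 2 0)) :=
    funext fun z => pearceyH_alt x r P0 Q0 pv (updC qv j k z)
  rw [hfun]
  have h1 := (hd_wsum_q pv qv (fun i => ((x i : ℝ) : ℂ)) j k 1 0 w).const_mul
    ((Real.sqrt 2 : ℂ) * P0)
  have h2 := (hd_wsum_q pv qv (fun i => ((x i : ℝ) : ℂ)) j k 2 1 w).const_mul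
    ((Real.sqrt 2 : ℂ) * Q0)
  have h3 := hd_wsum_q pv qv (fun i => ((x i : ℝ) : ℂ)) j k 0 1 w
  have h4 := hd_wsum_q pv qv (fun i => ((x i : ℝ) : ℂ)) j k 1 2 w
  have h5 := hd_wsum_q pv qv (fun i => (r : ℂ) * (x i : ℂ) ^ 2) j k 2 0 w
  have hA := ((hd_pSpt_q pv qv j k 0 0 w).sub (hd_pSpt_q pv qv j k 1 1 w)).add
    (hd_pSpt_q pv qv j k 2 2 w)
  have hSq := hA.pow 2
  have hT := (((hd_pSpt_q pv qv j k 0 0 w).mul (hd_pSpt_q pv qv j k 2 2 w)).sub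
    ((hd_pSpt_q pv qv j k 0 2 w).mul (hd_pSpt_q pv qv j k 2 0 w))).const_mul (4 : ℂ)
  have h6 := (hSq.sub hT).const_mul (1 / (2 * (r : ℂ)))
  exact ((((h1.add h2).add h3).add h4).add h5).add h6

end Aux


theorem pearcey_H_is_hamiltonian
    (m : ℕ) (hm : 1 ≤ m) (x : Fin m → ℝ)
    (hxpos : ∀ j, 0 < x j) (hxmono : StrictMono x)
    (p0 q0 : ℝ → ℂ) (p q : Fin m → Fin 3 → ℝ → ℂ)
    (hsys : ∀ r : ℝ, 0 < r → PearceySystemAt x p0 q0 p q r)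
    (hcon : PearceyConstraint p q) :
    ∀ r : ℝ, 0 < r →
      -- q₀'(r) = ∂H/∂p₀
      HasDerivAt (fun z : ℂ =>
          pearceyH x r z (q0 r) (fun j k => p j k r) (fun j k => q j k r))
        (deriv q0 r) (p0 r) ∧
      -- p₀'(r) = −∂H/∂q₀
      HasDerivAt (fun z : ℂ =>
          pearceyH x r (p0 r) z (fun j k => p j k r) (fun j k => q j k r))
        (-deriv p0 r) (q0 r) ∧
      ∀ (j : Fin m) (k : Fin 3),
        -- q_{j,k}'(r) = ∂H/∂p_{j,k}
        HasDerivAt (fun z : ℂ =>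
            pearceyH x r (p0 r) (q0 r) (updC (fun j' k' => p j' k' r) j k z)
              (fun j' k' => q j' k' r))
          (deriv (q j k) r) (p j k r) ∧
        -- p_{j,k}'(r) = −∂H/∂q_{j,k}
        HasDerivAt (fun z : ℂ =>
            pearceyH x r (p0 r) (q0 r) (fun j' k' => p j' k' r)
              (updC (fun j' k' => q j' k' r) j k z))
          (-deriv (p j k) r) (q j k r) := by
  intro r hr
  obtain ⟨hp0, hq0, hjk⟩ := hsys r hr
  have hS : (∑ i, p i 0 r * q i 0 r) + (∑ i, p i 1 r * q i 1 r) + (∑ i, p i 2 r * q i 2 r) = 0 := by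
    have h : ∑ i : Fin m, (p i 0 r * q i 0 r + p i 1 r * q i 1 r + p i 2 r * q i 2 r) = 0 :=
      Finset.sum_eq_zero fun i _ => by
        have := hcon r hr i
        simpa [Fin.sum_univ_three] using this
    simpa [Finset.sum_add_distrib] using h
  refine ⟨?_, ?_, fun j k => ⟨?_, ?_⟩⟩
  · rw [hq0.deriv]
    have h : HasDerivAt
        (fun z : ℂ => pearceyH x r z (q0 r) (fun j k => p j k r) (fun j k => q j k r))
        ((Real.sqrt 2 : ℂ) * 1 * ∑ i, (x i : ℂ) * p i 1 r * q i 0 r) (p0 r) := by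
      unfold pearceyH
      exact ((((((hasDerivAt_id (p0 r)).const_mul ((Real.sqrt 2 : ℂ))).mul_const
        (∑ i, (x i : ℂ) * p i 1 r * q i 0 r)).add_const _).add_const _).add_const _).add_const _
        |>.add_const _
    rw [show (Real.sqrt 2 : ℂ) * ∑ i, (x i : ℂ) * p i 1 r * q i 0 r
        = (Real.sqrt 2 : ℂ) * 1 * ∑ i, (x i : ℂ) * p i 1 r * q i 0 r from by ring]
    exact h
  · rw [hp0.deriv, neg_neg]
    have h : HasDerivAt
        (fun z : ℂ => pearceyH x r (p0 r) z (fun j k => p j k r) (fun j k => q j k r))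
        ((Real.sqrt 2 : ℂ) * 1 * ∑ i, (x i : ℂ) * p i 2 r * q i 1 r) (q0 r) := by
      unfold pearceyH
      exact ((((HasDerivAt.const_add _
        (((hasDerivAt_id (q0 r)).const_mul ((Real.sqrt 2 : ℂ))).mul_const
          (∑ i, (x i : ℂ) * p i 2 r * q i 1 r))).add_const _).add_const _).add_const _)
        |>.add_const _
    rw [show (Real.sqrt 2 : ℂ) * ∑ i, (x i : ℂ) * p i 2 r * q i 1 r
        = (Real.sqrt 2 : ℂ) * 1 * ∑ i, (x i : ℂ) * p i 2 r * q i 1 r from by ring]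
    exact h
  · have hf := hd_pearceyH_p x r (p0 r) (q0 r) (fun j' k' => p j' k' r)
      (fun j' k' => q j' k' r) j k (p j k r)
    rw [updC_self' (fun j' k' => p j' k' r) j k (p j k r) rfl] at hf
    convert hf using 1
    fin_cases k
    · simp only [Fin.zero_eta, Fin.mk_one, Fin.reduceFinMk, Fin.isValue]
      rw [(hjk j).1.deriv]
      simp only [pS, pSpt, Fin.isValue, Fin.reduceEq, reduceIte, if_true, if_false, pow_one]
      linear_combination (q j 0 r / (r : ℂ)) * hS
    · simp only [Fin.zero_eta, Fin.mk_one, Fin.reduceFinMk, Fin.isValue]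
      rw [(hjk j).2.1.deriv]
      simp only [pS, pSpt, Fin.isValue, Fin.reduceEq, reduceIte, if_true, if_false, pow_one]
      linear_combination (q j 1 r / (r : ℂ)) * hS
    · simp only [Fin.zero_eta, Fin.mk_one, Fin.reduceFinMk, Fin.isValue]
      rw [(hjk j).2.2.1.deriv]
      simp only [pS, pSpt, Fin.isValue, Fin.reduceEq, reduceIte, if_true, if_false, pow_one]
      linear_combination (q j 2 r / (r : ℂ)) * hS
  · have hf := hd_pearceyH_q x r (p0 r) (q0 r) (fun j' k' => p j' k' r)
      (fun j' k' => q j' k' r) j k (q j k r)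
    rw [updC_self' (fun j' k' => q j' k' r) j k (q j k r) rfl] at hf
    convert hf using 1
    fin_cases k
    · simp only [Fin.zero_eta, Fin.mk_one, Fin.reduceFinMk, Fin.isValue]
      rw [(hjk j).2.2.2.1.deriv]
      simp only [pS, pSpt, Fin.isValue, Fin.reduceEq, reduceIte, if_true, if_false, pow_one]
      linear_combination (p j 0 r / (r : ℂ)) * hS
    · simp only [Fin.zero_eta, Fin.mk_one, Fin.reduceFinMk, Fin.isValue]
      rw [(hjk j).2.2.2.2.1.deriv]
      simp only [pS, pSpt, Fin.isValue, Fin.reduceEq, reduceIte, if_true, if_false, pow_one]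
      linear_combination (p j 1 r / (r : ℂ)) * hS
    · simp only [Fin.zero_eta, Fin.mk_one, Fin.reduceFinMk, Fin.isValue]
      rw [(hjk j).2.2.2.2.2.deriv]
      simp only [pS, pSpt, Fin.isValue, Fin.reduceEq, reduceIte, if_true, if_false, pow_one]
      linear_combination (p j 2 r / (r : ℂ)) * hS
end
end

section
/- Let m ≥ 1 be an integer, 0 < x_1 < ... < x_m, and let p_0, q_0, p_{j,k}, q_{j,k} : (0,∞) → ℂ (j = 1,...,m; k = 1,2,3) be differentiable functions satisfying the system (1.4) and the constraints (1.5). Let 𝓗(r) denote the Hamiltonian H evaluated along these functions. Then the function r ↦ 2 p_0(r) q_0(r) + Σ_{j=1}^m [ p_{j,2}(r) q_{j,2}(r) + 2 p_{j,3}(r) q_{j,3}(r) ] − 3 r 𝓗(r) is differentiable on (0,∞), and for every r > 0: p_0(r) q_0'(r) + Σ_{j=1}^m Σ_{k=1}^3 p_{j,k}(r) q_{j,k}'(r) − 𝓗(r) = 𝓗(r) + (1/4) d/dr [ 2 p_0(r) q_0(r) + Σ_{j=1}^m ( p_{j,2}(r) q_{j,2}(r) + 2 p_{j,3}(r) q_{j,3}(r)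 ) − 3 r 𝓗(r) ]. -/
open Real Complex Filter Topology Finset

noncomputable section

/-- Auxiliary: the Hamiltonian along the flow, rewritten with single sums only. -/
def pearceyG {m : ℕ} (x : Fin m → ℝ) (p0 q0 : ℝ → ℂ)
    (p q : Fin m → Fin 3 → ℝ → ℂ) (r' : ℝ) : ℂ :=
  ↑(Real.sqrt 2) * p0 r' * ∑ j, (x j : ℂ) * p j 1 r' * q j 0 r'
    + ↑(Real.sqrt 2) * q0 r' * ∑ j, (x j : ℂ) * p j 2 r' * q j 1 r'
    + ∑ j, (x j : ℂ) * p j 0 r' * q j 1 r'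
    + ∑ j, (x j : ℂ) * p j 1 r' * q j 2 r'
    + (r' : ℂ) * ∑ j, (x j : ℂ) ^ 2 * p j 2 r' * q j 0 r'
    + 1 / (2 * (r' : ℂ)) *
        ((∑ j, p j 0 r' * q j 0 r' - ∑ j, p j 1 r' * q j 1 r' + ∑ j, p j 2 r' * q j 2 r') *
           (∑ j, p j 0 r' * q j 0 r' - ∑ j, p j 1 r' * q j 1 r' + ∑ j, p j 2 r' * q j 2 r')
          - 4 * (∑ j, p j 0 r' * q j 0 r') * (∑ j, p j 2 r' * q j 2 r')
          + 4 * (∑ j, p j 0 r' * q j 2 r') * (∑ j, p j 2 r' * q j 0 r'))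

/-- Auxiliary: atom form of `∑ j, ∑ k, p j k r * (q j k)' r`. -/
def pearceyL {m : ℕ} (x : Fin m → ℝ) (p0 q0 : ℝ → ℂ)
    (p q : Fin m → Fin 3 → ℝ → ℂ) (r : ℝ) : ℂ :=
  ((2 / (r : ℂ)) * (∑ i, p i 0 r * q i 0 r)) * (∑ i, p i 0 r * q i 0 r)
        + (∑ i, (x i : ℂ) * p i 0 r * q i 1 r)
        + ((2 / (r : ℂ)) * (∑ i, p i 2 r * q i 0 r)) * (∑ i, p i 0 r * q i 2 r)
        + (↑(Real.sqrt 2) * p0 r) * (∑ i, (x i : ℂ) * p i 1 r * q i 0 r)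
        + ((2 / (r : ℂ)) * (∑ i, p i 1 r * q i 1 r)) * (∑ i, p i 1 r * q i 1 r)
        + (∑ i, (x i : ℂ) * p i 1 r * q i 2 r)
        + (r : ℂ) * (∑ i, (x i : ℂ) ^ 2 * p i 2 r * q i 0 r)
        + ((2 / (r : ℂ)) * (∑ i, p i 0 r * q i 2 r)) * (∑ i, p i 2 r * q i 0 r)
        + (↑(Real.sqrt 2) * q0 r) * (∑ i, (x i : ℂ) * p i 2 r * q i 1 r)
        + ((2 / (r : ℂ)) * (∑ i, p i 2 r * q i 2 r)) * (∑ i, p i 2 r * q i 2 r)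

lemma pearcey_H_eq {m : ℕ} (x : Fin m → ℝ) (p0 q0 : ℝ → ℂ)
    (p q : Fin m → Fin 3 → ℝ → ℂ) :
    pearceyHAlong x p0 q0 p q = pearceyG x p0 q0 p q := by
  funext r'
  simp only [pearceyHAlong, pearceyH, pSpt, pearceyG]
  have hd : ∑ k, ∑ l, (p k 0 r' * p l 2 r' - p k 2 r' * p l 0 r') *
        (q k 0 r' * q l 2 r' - q k 2 r' * q l 0 r')
      = (∑ j, p j 0 r' * q j 0 r') * (∑ j, p j 2 r' * q j 2 r')
        - (∑ j, p j 0 r' * q j 2 r') * (∑ j, p j 2 r' * q j 0 r')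
        - (∑ j, p j 2 r' * q j 0 r') * (∑ j, p j 0 r' * q j 2 r')
        + (∑ j, p j 2 r' * q j 2 r') * (∑ j, p j 0 r' * q j 0 r') := by
    rw [Finset.sum_mul_sum, Finset.sum_mul_sum, Finset.sum_mul_sum, Finset.sum_mul_sum]
    simp only [← Finset.sum_sub_distrib, ← Finset.sum_add_distrib]
    exact Finset.sum_congr rfl fun k _ => Finset.sum_congr rfl fun l _ => by ring
  have h5 : ∑ j, (r' : ℂ) * (x j : ℂ) ^ 2 * p j 2 r' * q j 0 r'
      = (r' : ℂ) * ∑ j, (x j : ℂ) ^ 2 * p j 2 r' * q j 0 r' := by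
    rw [Finset.mul_sum]
    exact Finset.sum_congr rfl fun j _ => by ring
  rw [hd, h5]
  ring

lemma pearcey_sum_deriv {m : ℕ} (x : Fin m → ℝ) (p0 q0 : ℝ → ℂ)
    (p q : Fin m → Fin 3 → ℝ → ℂ) (r : ℝ)
    (hs : PearceySystemAt x p0 q0 p q r) :
    (∑ j, ∑ k, p j k r * deriv (q j k) r) = pearceyL x p0 q0 p q r := by
  obtain ⟨hp0, hq0, hjk⟩ := hs
  trans (∑ j, (((2 / (r : ℂ)) * (∑ i, p i 0 r * q i 0 r)) * (p j 0 r * q j 0 r)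
        + ((x j : ℂ) * p j 0 r * q j 1 r)
        + ((2 / (r : ℂ)) * (∑ i, p i 2 r * q i 0 r)) * (p j 0 r * q j 2 r)
        + (↑(Real.sqrt 2) * p0 r) * ((x j : ℂ) * p j 1 r * q j 0 r)
        + ((2 / (r : ℂ)) * (∑ i, p i 1 r * q i 1 r)) * (p j 1 r * q j 1 r)
        + ((x j : ℂ) * p j 1 r * q j 2 r)
        + (r : ℂ) * ((x j : ℂ) ^ 2 * p j 2 r * q j 0 r)
        + ((2 / (r : ℂ)) * (∑ i, p i 0 r * q i 2 r)) * (p j 2 r * q j 0 r)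
        + (↑(Real.sqrt 2) * q0 r) * ((x j : ℂ) * p j 2 r * q j 1 r)
        + ((2 / (r : ℂ)) * (∑ i, p i 2 r * q i 2 r)) * (p j 2 r * q j 2 r)))
  · refine Finset.sum_congr rfl fun j _ => ?_
    rw [Fin.sum_univ_three, ((hjk j).1).deriv, ((hjk j).2.1).deriv, ((hjk j).2.2.1).deriv]
    simp only [pS]
    push_cast
    ring
  · simp only [pearceyL, Finset.sum_add_distrib, ← Finset.mul_sum]
    try ring

set_option maxHeartbeats 1000000 in
lemma pearcey_deriv {m : ℕ} (x : Fin m → ℝ) (p0 q0 : ℝ → ℂ)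
    (p q : Fin m → Fin 3 → ℝ → ℂ) (r : ℝ) (hr : 0 < r)
    (hs : PearceySystemAt x p0 q0 p q r)
    (hcon : ∀ j : Fin m, ∑ k, p j k r * q j k r = 0) :
    HasDerivAt (fun r' : ℝ => 2 * p0 r' * q0 r'
        + (∑ j, (p j 1 r' * q j 1 r' + 2 * p j 2 r' * q j 2 r'))
        - 3 * (r' : ℂ) * pearceyG x p0 q0 p q r')
      (4 * (p0 r * (↑(Real.sqrt 2) * ∑ j, (x j : ℂ) * p j 1 r * q j 0 r)
        + pearceyL x p0 q0 p q r - 2 * pearceyG x p0 q0 p q r)) r := by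
  have hrne : (r : ℂ) ≠ 0 := Complex.ofReal_ne_zero.mpr hr.ne'
  have h2rne : (2 * (r : ℂ)) ≠ 0 := mul_ne_zero two_ne_zero hrne
  obtain ⟨hp0, hq0, hjk⟩ := hs
  have hT : (∑ i, p i 0 r * q i 0 r) + (∑ i, p i 1 r * q i 1 r) + (∑ i, p i 2 r * q i 2 r) = 0 := by
    have h : ∑ j, ∑ k, p j k r * q j k r = 0 := Finset.sum_eq_zero fun j _ => hcon j
    calc (∑ i, p i 0 r * q i 0 r) + (∑ i, p i 1 r * q i 1 r) + (∑ i, p i 2 r * q i 2 r)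
        = ∑ j, ∑ k, p j k r * q j k r := by
          simp only [Fin.sum_univ_three, Finset.sum_add_distrib]
      _ = 0 := h
  have h22 : (∑ i, p i 2 r * q i 2 r)
      = -(∑ i, p i 0 r * q i 0 r) - (∑ i, p i 1 r * q i 1 r) := by
    linear_combination hT
  have hr' : HasDerivAt (fun y : ℝ => (y : ℂ)) 1 r := by
    exact Complex.ofRealCLM.hasDerivAt
  have hS00 : HasDerivAt (fun r' : ℝ => ∑ j, p j 0 r' * q j 0 r')
      ((∑ i, (x i : ℂ) * p i 0 r * q i 1 r)
        + (-(↑(Real.sqrt 2) * p0 r)) * (∑ i, (x i : ℂ) * p i 1 r * q i 0 r)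
        + (-(r : ℂ)) * (∑ i, (x i : ℂ) ^ 2 * p i 2 r * q i 0 r)
        + (-((2 / (r : ℂ)) * (∑ i, p i 0 r * q i 2 r))) * (∑ i, p i 2 r * q i 0 r)
        + ((2 / (r : ℂ)) * (∑ i, p i 2 r * q i 0 r)) * (∑ i, p i 0 r * q i 2 r)) r := by
    have h := HasDerivAt.fun_sum (fun (j : Fin m) (_ : j ∈ Finset.univ) => ((hjk j).2.2.2.1).mul ((hjk j).1))
    convert h using 1
    · rfl
    · rfl
    symm
    trans (∑ j, (((x j : ℂ) * p j 0 r * q j 1 r)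
        + (-(↑(Real.sqrt 2) * p0 r)) * ((x j : ℂ) * p j 1 r * q j 0 r)
        + (-(r : ℂ)) * ((x j : ℂ) ^ 2 * p j 2 r * q j 0 r)
        + (-((2 / (r : ℂ)) * (∑ i, p i 0 r * q i 2 r))) * (p j 2 r * q j 0 r)
        + ((2 / (r : ℂ)) * (∑ i, p i 2 r * q i 0 r)) * (p j 0 r * q j 2 r)))
    · refine Finset.sum_congr rfl fun j _ => ?_
      simp only [pS]
      push_cast
      ring
    · simp only [Finset.sum_add_distrib, ← Finset.mul_sum]
      try ring
  have hS11 : HasDerivAt (fun r' : ℝ => ∑ j, p j 1 r' * q j 1 r')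
      ((-1) * (∑ i, (x i : ℂ) * p i 0 r * q i 1 r)
        + (-(↑(Real.sqrt 2) * q0 r)) * (∑ i, (x i : ℂ) * p i 2 r * q i 1 r)
        + (↑(Real.sqrt 2) * p0 r) * (∑ i, (x i : ℂ) * p i 1 r * q i 0 r)
        + (∑ i, (x i : ℂ) * p i 1 r * q i 2 r)) r := by
    have h := HasDerivAt.fun_sum (fun (j : Fin m) (_ : j ∈ Finset.univ) => ((hjk j).2.2.2.2.1).mul ((hjk j).2.1))
    convert h using 1
    · rfl
    · rfl
    symm
    trans (∑ j, ((-1) * ((x j : ℂ) * p j 0 r * q j 1 r)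
        + (-(↑(Real.sqrt 2) * q0 r)) * ((x j : ℂ) * p j 2 r * q j 1 r)
        + (↑(Real.sqrt 2) * p0 r) * ((x j : ℂ) * p j 1 r * q j 0 r)
        + ((x j : ℂ) * p j 1 r * q j 2 r)))
    · refine Finset.sum_congr rfl fun j _ => ?_
      simp only [pS]
      push_cast
      ring
    · simp only [Finset.sum_add_distrib, ← Finset.mul_sum]
      try ring
  have hS22 : HasDerivAt (fun r' : ℝ => ∑ j, p j 2 r' * q j 2 r')
      ((-((2 / (r : ℂ)) * (∑ i, p i 2 r * q i 0 r))) * (∑ i, p i 0 r * q i 2 r)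
        + (-1) * (∑ i, (x i : ℂ) * p i 1 r * q i 2 r)
        + (r : ℂ) * (∑ i, (x i : ℂ) ^ 2 * p i 2 r * q i 0 r)
        + ((2 / (r : ℂ)) * (∑ i, p i 0 r * q i 2 r)) * (∑ i, p i 2 r * q i 0 r)
        + (↑(Real.sqrt 2) * q0 r) * (∑ i, (x i : ℂ) * p i 2 r * q i 1 r)) r := by
    have h := HasDerivAt.fun_sum (fun (j : Fin m) (_ : j ∈ Finset.univ) => ((hjk j).2.2.2.2.2).mul ((hjk j).2.2.1))
    convert h using 1
    · rfl
    · rfl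
    symm
    trans (∑ j, ((-((2 / (r : ℂ)) * (∑ i, p i 2 r * q i 0 r))) * (p j 0 r * q j 2 r)
        + (-1) * ((x j : ℂ) * p j 1 r * q j 2 r)
        + (r : ℂ) * ((x j : ℂ) ^ 2 * p j 2 r * q j 0 r)
        + ((2 / (r : ℂ)) * (∑ i, p i 0 r * q i 2 r)) * (p j 2 r * q j 0 r)
        + (↑(Real.sqrt 2) * q0 r) * ((x j : ℂ) * p j 2 r * q j 1 r)))
    · refine Finset.sum_congr rfl fun j _ => ?_
      simp only [pS]
      push_cast
      ring
    · simp only [Finset.sum_add_distrib, ← Finset.mul_sum]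
      try ring
  have hS02 : HasDerivAt (fun r' : ℝ => ∑ j, p j 0 r' * q j 2 r')
      ((-((2 / (r : ℂ)) * (∑ i, p i 0 r * q i 0 r))) * (∑ i, p i 0 r * q i 2 r)
        + (-(↑(Real.sqrt 2) * p0 r)) * (∑ i, (x i : ℂ) * p i 1 r * q i 2 r)
        + (-(r : ℂ)) * (∑ i, (x i : ℂ) ^ 2 * p i 2 r * q i 2 r)
        + (-((2 / (r : ℂ)) * (∑ i, p i 0 r * q i 2 r))) * (∑ i, p i 2 r * q i 2 r)
        + (r : ℂ) * (∑ i, (x i : ℂ) ^ 2 * p i 0 r * q i 0 r)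
        + ((2 / (r : ℂ)) * (∑ i, p i 0 r * q i 2 r)) * (∑ i, p i 0 r * q i 0 r)
        + (↑(Real.sqrt 2) * q0 r) * (∑ i, (x i : ℂ) * p i 0 r * q i 1 r)
        + ((2 / (r : ℂ)) * (∑ i, p i 2 r * q i 2 r)) * (∑ i, p i 0 r * q i 2 r)) r := by
    have h := HasDerivAt.fun_sum (fun (j : Fin m) (_ : j ∈ Finset.univ) => ((hjk j).2.2.2.1).mul ((hjk j).2.2.1))
    convert h using 1
    · rfl
    · rfl
    symm
    trans (∑ j, ((-((2 / (r : ℂ)) * (∑ i, p i 0 r * q i 0 r))) * (p j 0 r * q j 2 r)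
        + (-(↑(Real.sqrt 2) * p0 r)) * ((x j : ℂ) * p j 1 r * q j 2 r)
        + (-(r : ℂ)) * ((x j : ℂ) ^ 2 * p j 2 r * q j 2 r)
        + (-((2 / (r : ℂ)) * (∑ i, p i 0 r * q i 2 r))) * (p j 2 r * q j 2 r)
        + (r : ℂ) * ((x j : ℂ) ^ 2 * p j 0 r * q j 0 r)
        + ((2 / (r : ℂ)) * (∑ i, p i 0 r * q i 2 r)) * (p j 0 r * q j 0 r)
        + (↑(Real.sqrt 2) * q0 r) * ((x j : ℂ) * p j 0 r * q j 1 r)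
        + ((2 / (r : ℂ)) * (∑ i, p i 2 r * q i 2 r)) * (p j 0 r * q j 2 r)))
    · refine Finset.sum_congr rfl fun j _ => ?_
      simp only [pS]
      push_cast
      ring
    · simp only [Finset.sum_add_distrib, ← Finset.mul_sum]
      try ring
  have hS20 : HasDerivAt (fun r' : ℝ => ∑ j, p j 2 r' * q j 0 r')
      ((-((2 / (r : ℂ)) * (∑ i, p i 2 r * q i 0 r))) * (∑ i, p i 0 r * q i 0 r)
        + (-1) * (∑ i, (x i : ℂ) * p i 1 r * q i 0 r)
        + (-((2 / (r : ℂ)) * (∑ i, p i 2 r * q i 2 r))) * (∑ i, p i 2 r * q i 0 r)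
        + ((2 / (r : ℂ)) * (∑ i, p i 0 r * q i 0 r)) * (∑ i, p i 2 r * q i 0 r)
        + (∑ i, (x i : ℂ) * p i 2 r * q i 1 r)
        + ((2 / (r : ℂ)) * (∑ i, p i 2 r * q i 0 r)) * (∑ i, p i 2 r * q i 2 r)) r := by
    have h := HasDerivAt.fun_sum (fun (j : Fin m) (_ : j ∈ Finset.univ) => ((hjk j).2.2.2.2.2).mul ((hjk j).1))
    convert h using 1
    · rfl
    · rfl
    symm
    trans (∑ j, ((-((2 / (r : ℂ)) * (∑ i, p i 2 r * q i 0 r))) * (p j 0 r * q j 0 r)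
        + (-1) * ((x j : ℂ) * p j 1 r * q j 0 r)
        + (-((2 / (r : ℂ)) * (∑ i, p i 2 r * q i 2 r))) * (p j 2 r * q j 0 r)
        + ((2 / (r : ℂ)) * (∑ i, p i 0 r * q i 0 r)) * (p j 2 r * q j 0 r)
        + ((x j : ℂ) * p j 2 r * q j 1 r)
        + ((2 / (r : ℂ)) * (∑ i, p i 2 r * q i 0 r)) * (p j 2 r * q j 2 r)))
    · refine Finset.sum_congr rfl fun j _ => ?_
      simp only [pS]
      push_cast
      ring
    · simp only [Finset.sum_add_distrib, ← Finset.mul_sum]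
      try ring
  have hA : HasDerivAt (fun r' : ℝ => ∑ j, (x j : ℂ) * p j 1 r' * q j 0 r')
      ((-1) * (∑ i, (x i : ℂ) ^ 2 * p i 0 r * q i 0 r)
        + (-((2 / (r : ℂ)) * (∑ i, p i 1 r * q i 1 r))) * (∑ i, (x i : ℂ) * p i 1 r * q i 0 r)
        + (-(↑(Real.sqrt 2) * q0 r)) * (∑ i, (x i : ℂ) ^ 2 * p i 2 r * q i 0 r)
        + ((2 / (r : ℂ)) * (∑ i, p i 0 r * q i 0 r)) * (∑ i, (x i : ℂ) * p i 1 r * q i 0 r)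
        + (∑ i, (x i : ℂ) ^ 2 * p i 1 r * q i 1 r)
        + ((2 / (r : ℂ)) * (∑ i, p i 2 r * q i 0 r)) * (∑ i, (x i : ℂ) * p i 1 r * q i 2 r)) r := by
    have h := HasDerivAt.fun_sum (fun (j : Fin m) (_ : j ∈ Finset.univ) => (((hjk j).2.2.2.2.1).const_mul ((x j : ℂ))).mul ((hjk j).1))
    convert h using 1
    · rfl
    · rfl
    symm
    trans (∑ j, ((-1) * ((x j : ℂ) ^ 2 * p j 0 r * q j 0 r)
        + (-((2 / (r : ℂ)) * (∑ i, p i 1 r * q i 1 r))) * ((x j : ℂ) * p j 1 r * q j 0 r)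
        + (-(↑(Real.sqrt 2) * q0 r)) * ((x j : ℂ) ^ 2 * p j 2 r * q j 0 r)
        + ((2 / (r : ℂ)) * (∑ i, p i 0 r * q i 0 r)) * ((x j : ℂ) * p j 1 r * q j 0 r)
        + ((x j : ℂ) ^ 2 * p j 1 r * q j 1 r)
        + ((2 / (r : ℂ)) * (∑ i, p i 2 r * q i 0 r)) * ((x j : ℂ) * p j 1 r * q j 2 r)))
    · refine Finset.sum_congr rfl fun j _ => ?_
      simp only [pS]
      push_cast
      ring
    · simp only [Finset.sum_add_distrib, ← Finset.mul_sum]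
      try ring
  have hB2 : HasDerivAt (fun r' : ℝ => ∑ j, (x j : ℂ) * p j 2 r' * q j 1 r')
      ((-((2 / (r : ℂ)) * (∑ i, p i 2 r * q i 0 r))) * (∑ i, (x i : ℂ) * p i 0 r * q i 1 r)
        + (-1) * (∑ i, (x i : ℂ) ^ 2 * p i 1 r * q i 1 r)
        + (-((2 / (r : ℂ)) * (∑ i, p i 2 r * q i 2 r))) * (∑ i, (x i : ℂ) * p i 2 r * q i 1 r)
        + (↑(Real.sqrt 2) * p0 r) * (∑ i, (x i : ℂ) ^ 2 * p i 2 r * q i 0 r)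
        + ((2 / (r : ℂ)) * (∑ i, p i 1 r * q i 1 r)) * (∑ i, (x i : ℂ) * p i 2 r * q i 1 r)
        + (∑ i, (x i : ℂ) ^ 2 * p i 2 r * q i 2 r)) r := by
    have h := HasDerivAt.fun_sum (fun (j : Fin m) (_ : j ∈ Finset.univ) => (((hjk j).2.2.2.2.2).const_mul ((x j : ℂ))).mul ((hjk j).2.1))
    convert h using 1
    · rfl
    · rfl
    symm
    trans (∑ j, ((-((2 / (r : ℂ)) * (∑ i, p i 2 r * q i 0 r))) * ((x j : ℂ) * p j 0 r * q j 1 r)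
        + (-1) * ((x j : ℂ) ^ 2 * p j 1 r * q j 1 r)
        + (-((2 / (r : ℂ)) * (∑ i, p i 2 r * q i 2 r))) * ((x j : ℂ) * p j 2 r * q j 1 r)
        + (↑(Real.sqrt 2) * p0 r) * ((x j : ℂ) ^ 2 * p j 2 r * q j 0 r)
        + ((2 / (r : ℂ)) * (∑ i, p i 1 r * q i 1 r)) * ((x j : ℂ) * p j 2 r * q j 1 r)
        + ((x j : ℂ) ^ 2 * p j 2 r * q j 2 r)))
    · refine Finset.sum_congr rfl fun j _ => ?_
      simp only [pS]
      push_cast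
      ring
    · simp only [Finset.sum_add_distrib, ← Finset.mul_sum]
      try ring
  have hB3 : HasDerivAt (fun r' : ℝ => ∑ j, (x j : ℂ) * p j 0 r' * q j 1 r')
      ((-((2 / (r : ℂ)) * (∑ i, p i 0 r * q i 0 r))) * (∑ i, (x i : ℂ) * p i 0 r * q i 1 r)
        + (-(↑(Real.sqrt 2) * p0 r)) * (∑ i, (x i : ℂ) ^ 2 * p i 1 r * q i 1 r)
        + (-(r : ℂ)) * (∑ i, (x i : ℂ) ^ 3 * p i 2 r * q i 1 r)
        + (-((2 / (r : ℂ)) * (∑ i, p i 0 r * q i 2 r))) * (∑ i, (x i : ℂ) * p i 2 r * q i 1 r)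
        + (↑(Real.sqrt 2) * p0 r) * (∑ i, (x i : ℂ) ^ 2 * p i 0 r * q i 0 r)
        + ((2 / (r : ℂ)) * (∑ i, p i 1 r * q i 1 r)) * (∑ i, (x i : ℂ) * p i 0 r * q i 1 r)
        + (∑ i, (x i : ℂ) ^ 2 * p i 0 r * q i 2 r)) r := by
    have h := HasDerivAt.fun_sum (fun (j : Fin m) (_ : j ∈ Finset.univ) => (((hjk j).2.2.2.1).const_mul ((x j : ℂ))).mul ((hjk j).2.1))
    convert h using 1
    · rfl
    · rfl
    symm
    trans (∑ j, ((-((2 / (r : ℂ)) * (∑ i, p i 0 r * q i 0 r))) * ((x j : ℂ) * p j 0 r * q j 1 r)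
        + (-(↑(Real.sqrt 2) * p0 r)) * ((x j : ℂ) ^ 2 * p j 1 r * q j 1 r)
        + (-(r : ℂ)) * ((x j : ℂ) ^ 3 * p j 2 r * q j 1 r)
        + (-((2 / (r : ℂ)) * (∑ i, p i 0 r * q i 2 r))) * ((x j : ℂ) * p j 2 r * q j 1 r)
        + (↑(Real.sqrt 2) * p0 r) * ((x j : ℂ) ^ 2 * p j 0 r * q j 0 r)
        + ((2 / (r : ℂ)) * (∑ i, p i 1 r * q i 1 r)) * ((x j : ℂ) * p j 0 r * q j 1 r)
        + ((x j : ℂ) ^ 2 * p j 0 r * q j 2 r)))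
    · refine Finset.sum_congr rfl fun j _ => ?_
      simp only [pS]
      push_cast
      ring
    · simp only [Finset.sum_add_distrib, ← Finset.mul_sum]
      try ring
  have hB4 : HasDerivAt (fun r' : ℝ => ∑ j, (x j : ℂ) * p j 1 r' * q j 2 r')
      ((-1) * (∑ i, (x i : ℂ) ^ 2 * p i 0 r * q i 2 r)
        + (-((2 / (r : ℂ)) * (∑ i, p i 1 r * q i 1 r))) * (∑ i, (x i : ℂ) * p i 1 r * q i 2 r)
        + (-(↑(Real.sqrt 2) * q0 r)) * (∑ i, (x i : ℂ) ^ 2 * p i 2 r * q i 2 r)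
        + (r : ℂ) * (∑ i, (x i : ℂ) ^ 3 * p i 1 r * q i 0 r)
        + ((2 / (r : ℂ)) * (∑ i, p i 0 r * q i 2 r)) * (∑ i, (x i : ℂ) * p i 1 r * q i 0 r)
        + (↑(Real.sqrt 2) * q0 r) * (∑ i, (x i : ℂ) ^ 2 * p i 1 r * q i 1 r)
        + ((2 / (r : ℂ)) * (∑ i, p i 2 r * q i 2 r)) * (∑ i, (x i : ℂ) * p i 1 r * q i 2 r)) r := by
    have h := HasDerivAt.fun_sum (fun (j : Fin m) (_ : j ∈ Finset.univ) => (((hjk j).2.2.2.2.1).const_mul ((x j : ℂ))).mul ((hjk j).2.2.1))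
    convert h using 1
    · rfl
    · rfl
    symm
    trans (∑ j, ((-1) * ((x j : ℂ) ^ 2 * p j 0 r * q j 2 r)
        + (-((2 / (r : ℂ)) * (∑ i, p i 1 r * q i 1 r))) * ((x j : ℂ) * p j 1 r * q j 2 r)
        + (-(↑(Real.sqrt 2) * q0 r)) * ((x j : ℂ) ^ 2 * p j 2 r * q j 2 r)
        + (r : ℂ) * ((x j : ℂ) ^ 3 * p j 1 r * q j 0 r)
        + ((2 / (r : ℂ)) * (∑ i, p i 0 r * q i 2 r)) * ((x j : ℂ) * p j 1 r * q j 0 r)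
        + (↑(Real.sqrt 2) * q0 r) * ((x j : ℂ) ^ 2 * p j 1 r * q j 1 r)
        + ((2 / (r : ℂ)) * (∑ i, p i 2 r * q i 2 r)) * ((x j : ℂ) * p j 1 r * q j 2 r)))
    · refine Finset.sum_congr rfl fun j _ => ?_
      simp only [pS]
      push_cast
      ring
    · simp only [Finset.sum_add_distrib, ← Finset.mul_sum]
      try ring
  have hB5 : HasDerivAt (fun r' : ℝ => ∑ j, (x j : ℂ) ^ 2 * p j 2 r' * q j 0 r')
      ((-((2 / (r : ℂ)) * (∑ i, p i 2 r * q i 0 r))) * (∑ i, (x i : ℂ) ^ 2 * p i 0 r * q i 0 r)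
        + (-1) * (∑ i, (x i : ℂ) ^ 3 * p i 1 r * q i 0 r)
        + (-((2 / (r : ℂ)) * (∑ i, p i 2 r * q i 2 r))) * (∑ i, (x i : ℂ) ^ 2 * p i 2 r * q i 0 r)
        + ((2 / (r : ℂ)) * (∑ i, p i 0 r * q i 0 r)) * (∑ i, (x i : ℂ) ^ 2 * p i 2 r * q i 0 r)
        + (∑ i, (x i : ℂ) ^ 3 * p i 2 r * q i 1 r)
        + ((2 / (r : ℂ)) * (∑ i, p i 2 r * q i 0 r)) * (∑ i, (x i : ℂ) ^ 2 * p i 2 r * q i 2 r)) r := by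
    have h := HasDerivAt.fun_sum (fun (j : Fin m) (_ : j ∈ Finset.univ) => (((hjk j).2.2.2.2.2).const_mul ((x j : ℂ) ^ 2)).mul ((hjk j).1))
    convert h using 1
    · rfl
    · rfl
    symm
    trans (∑ j, ((-((2 / (r : ℂ)) * (∑ i, p i 2 r * q i 0 r))) * ((x j : ℂ) ^ 2 * p j 0 r * q j 0 r)
        + (-1) * ((x j : ℂ) ^ 3 * p j 1 r * q j 0 r)
        + (-((2 / (r : ℂ)) * (∑ i, p i 2 r * q i 2 r))) * ((x j : ℂ) ^ 2 * p j 2 r * q j 0 r)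
        + ((2 / (r : ℂ)) * (∑ i, p i 0 r * q i 0 r)) * ((x j : ℂ) ^ 2 * p j 2 r * q j 0 r)
        + ((x j : ℂ) ^ 3 * p j 2 r * q j 1 r)
        + ((2 / (r : ℂ)) * (∑ i, p i 2 r * q i 0 r)) * ((x j : ℂ) ^ 2 * p j 2 r * q j 2 r)))
    · refine Finset.sum_congr rfl fun j _ => ?_
      simp only [pS]
      push_cast
      ring
    · simp only [Finset.sum_add_distrib, ← Finset.mul_sum]
      try ring
  have hP : HasDerivAt (fun r' : ℝ => ∑ j, (p j 1 r' * q j 1 r' + 2 * p j 2 r' * q j 2 r'))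
      ((-1) * (∑ i, (x i : ℂ) * p i 0 r * q i 1 r)
        + (-(↑(Real.sqrt 2) * q0 r)) * (∑ i, (x i : ℂ) * p i 2 r * q i 1 r)
        + (↑(Real.sqrt 2) * p0 r) * (∑ i, (x i : ℂ) * p i 1 r * q i 0 r)
        + (∑ i, (x i : ℂ) * p i 1 r * q i 2 r)
        + (-(2 * (2 / (r : ℂ)) * (∑ i, p i 2 r * q i 0 r))) * (∑ i, p i 0 r * q i 2 r)
        + (-2) * (∑ i, (x i : ℂ) * p i 1 r * q i 2 r)
        + (2 * (r : ℂ)) * (∑ i, (x i : ℂ) ^ 2 * p i 2 r * q i 0 r)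
        + (2 * (2 / (r : ℂ)) * (∑ i, p i 0 r * q i 2 r)) * (∑ i, p i 2 r * q i 0 r)
        + (2 * ↑(Real.sqrt 2) * q0 r) * (∑ i, (x i : ℂ) * p i 2 r * q i 1 r)) r := by
    have h := HasDerivAt.fun_sum (fun (j : Fin m) (_ : j ∈ Finset.univ) =>
      (((hjk j).2.2.2.2.1).mul ((hjk j).2.1)).add ((((hjk j).2.2.2.2.2).const_mul (2 : ℂ)).mul ((hjk j).2.2.1)))
    convert h using 1
    · rfl
    · rfl
    symm
    trans (∑ j, ((-1) * ((x j : ℂ) * p j 0 r * q j 1 r)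
        + (-(↑(Real.sqrt 2) * q0 r)) * ((x j : ℂ) * p j 2 r * q j 1 r)
        + (↑(Real.sqrt 2) * p0 r) * ((x j : ℂ) * p j 1 r * q j 0 r)
        + ((x j : ℂ) * p j 1 r * q j 2 r)
        + (-(2 * (2 / (r : ℂ)) * (∑ i, p i 2 r * q i 0 r))) * (p j 0 r * q j 2 r)
        + (-2) * ((x j : ℂ) * p j 1 r * q j 2 r)
        + (2 * (r : ℂ)) * ((x j : ℂ) ^ 2 * p j 2 r * q j 0 r)
        + (2 * (2 / (r : ℂ)) * (∑ i, p i 0 r * q i 2 r)) * (p j 2 r * q j 0 r)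
        + (2 * ↑(Real.sqrt 2) * q0 r) * ((x j : ℂ) * p j 2 r * q j 1 r)))
    · refine Finset.sum_congr rfl fun j _ => ?_
      simp only [pS]
      push_cast
      ring
    · simp only [Finset.sum_add_distrib, ← Finset.mul_sum]
      try ring
  have hf := (hS00.sub hS11).add hS22
  have hK := ((hf.mul hf).sub ((hS00.const_mul (4 : ℂ)).mul hS22)).add
    ((hS02.const_mul (4 : ℂ)).mul hS20)
  have hinv : HasDerivAt (fun y : ℝ => 1 / (2 * (y : ℂ))) (-(1 / (2 * (r : ℂ) ^ 2))) r := by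
    convert (hasDerivAt_const r (1 : ℂ)).div (hr'.const_mul (2 : ℂ)) h2rne using 1
    · rfl
    · rfl
    field_simp
    ring
  have hG := ((((((hp0.const_mul (↑(Real.sqrt 2) : ℂ)).mul hA).add
      ((hq0.const_mul (↑(Real.sqrt 2) : ℂ)).mul hB2)).add hB3).add hB4).add
      (hr'.mul hB5)).add (hinv.mul hK)
  have hF := (((hp0.const_mul (2 : ℂ)).mul hq0).add hP).sub ((hr'.const_mul (3 : ℂ)).mul hG)
  simp only [pearceyG, pearceyL]
  convert hF using 1
  · rfl
  · rfl
  simp only [Pi.add_apply, Pi.sub_apply, Pi.mul_apply]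
  rw [h22]
  field_simp [hrne]
  have hx : ((r : ℂ)) ^ 6 * (((r : ℂ))⁻¹) ^ 6 = 1 := by
    rw [← mul_pow, mul_inv_cancel₀ hrne, one_pow]
  ring

theorem pearcey_magical_identity
    (m : ℕ) (hm : 1 ≤ m) (x : Fin m → ℝ)
    (hxpos : ∀ j, 0 < x j) (hxmono : StrictMono x)
    (p0 q0 : ℝ → ℂ) (p q : Fin m → Fin 3 → ℝ → ℂ)
    (hsys : ∀ r : ℝ, 0 < r → PearceySystemAt x p0 q0 p q r)
    (hcon : PearceyConstraint p q) :
    (∀ r : ℝ, 0 < r → DifferentiableAt ℝ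
      (fun r' : ℝ => 2 * p0 r' * q0 r'
        + (∑ j, (p j 1 r' * q j 1 r' + 2 * p j 2 r' * q j 2 r'))
        - 3 * r' * pearceyHAlong x p0 q0 p q r') r) ∧
    ∀ r : ℝ, 0 < r →
      p0 r * deriv q0 r + (∑ j, ∑ k, p j k r * deriv (q j k) r)
          - pearceyHAlong x p0 q0 p q r
        = pearceyHAlong x p0 q0 p q r
          + 1 / 4 * deriv (fun r' : ℝ => 2 * p0 r' * q0 r'
              + (∑ j, (p j 1 r' * q j 1 r' + 2 * p j 2 r' * q j 2 r'))
              - 3 * r' * pearceyHAlong x p0 q0 p q r') r := by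
  constructor
  · intro r hr
    simp only [pearcey_H_eq]
    exact (pearcey_deriv x p0 q0 p q r hr (hsys r hr) (hcon r hr)).differentiableAt
  · intro r hr
    obtain ⟨hp0', hq0', hjk'⟩ := hsys r hr
    simp only [pearcey_H_eq]
    rw [hq0'.deriv, (pearcey_deriv x p0 q0 p q r hr (hsys r hr) (hcon r hr)).deriv,
      pearcey_sum_deriv x p0 q0 p q r (hsys r hr)]
    ring
end
end

section
/- Let m ≥ 1 be an integer, let x_1, ..., x_m be distinct positive real numbers, and let p_0, q_0, p_{j,k}, q_{j,k} : J → ℂ (j = 1,...,m; k = 1,2,3) be differentiable functions on an interval J ⊆ (0,∞) satisfying the system (1.4) (no constraint is assumed). Then for each j = 1,...,m, the function r ↦ Σ_{k=1}^3 p_{j,k}(r) q_{j,k}(r) is constant on J. In particular, if Σ_{k=1}^3 p_{j,k}(r_0) q_{j,k}(r_0) = 0 for some r_0 ∈ J, then the constraint Σ_{k=1}^3 p_{j,k}(r) q_{j,k}(r) = 0 holds for all r ∈ J. -/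
open Real Complex Filter Topology Finset

noncomputable section

theorem pearcey_constraint_conserved
    (m : ℕ) (hm : 1 ≤ m) (x : Fin m → ℝ)
    (hxpos : ∀ j, 0 < x j) (hxinj : Function.Injective x)
    (J : Set ℝ) (hJ : J ⊆ Set.Ioi (0 : ℝ)) (hJconn : J.OrdConnected)
    (p0 q0 : ℝ → ℂ) (p q : Fin m → Fin 3 → ℝ → ℂ)
    (hsys : ∀ r ∈ J, PearceySystemAt x p0 q0 p q r) :
    (∀ j : Fin m, ∀ r₁ ∈ J, ∀ r₂ ∈ J,
      (∑ k, p j k r₁ * q j k r₁) = ∑ k, p j k r₂ * q j k r₂) ∧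
    (∀ j : Fin m, ∀ r₀ ∈ J, (∑ k, p j k r₀ * q j k r₀) = 0 →
      ∀ r ∈ J, (∑ k, p j k r * q j k r) = 0) := by
  have key : ∀ j : Fin m, ∀ r ∈ J,
      HasDerivAt (fun s => ∑ k, p j k s * q j k s) 0 r := by
    intro j r hr
    obtain ⟨_, _, h⟩ := hsys r hr
    obtain ⟨hq0, hq1, hq2, hp0, hp1, hp2⟩ := h j
    have H := ((hp0.mul hq0).add (hp1.mul hq1)).add (hp2.mul hq2)
    simp only [Fin.sum_univ_three]
    convert H using 1
    case e'_4 => rfl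
    case e'_8 => rfl
    case e'_9 => ring
  have hconv : Convex ℝ J := hJconn.convex
  have h0 : (ContinuousLinearMap.smulRight (1 : ℝ →L[ℝ] ℝ) (0 : ℂ)) = 0 := by
    ext t; simp
  have hconst : ∀ j : Fin m, ∀ r₁ ∈ J, ∀ r₂ ∈ J,
      (∑ k, p j k r₁ * q j k r₁) = ∑ k, p j k r₂ * q j k r₂ := by
    intro j r₁ h1 r₂ h2
    have hb := hconv.norm_image_sub_le_of_norm_hasFDerivWithin_le
      (f := fun s => ∑ k, p j k s * q j k s)
      (f' := fun _ => (0 : ℝ →L[ℝ] ℂ)) (C := 0)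
      (fun y hy => by
        have := (key j y hy).hasFDerivAt.hasFDerivWithinAt (s := J)
        rwa [ContinuousLinearMap.toSpanSingleton_zero] at this)
      (fun y hy => by simp) h1 h2
    simp only [zero_mul] at hb
    have : (∑ k, p j k r₂ * q j k r₂) - ∑ k, p j k r₁ * q j k r₁ = 0 := by
      have := le_antisymm hb (norm_nonneg _)
      exact norm_eq_zero.mp this
    exact (sub_eq_zero.mp this).symm
  refine ⟨hconst, ?_⟩
  intro j r₀ hr₀ hz r hr
  rw [hconst j r hr r₀ hr₀, hz]
end
end
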